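/- Consider the following discrete process: start with an equitable partition of n ≥ h elements into h parts, designate the largest k parts (0 < k < h), and suppose t ≥ k⌈n/h⌉. Repeatedly move single elements from non-designated to designated parts, keeping both groups internally equitable, until the designated parts contain exactly t elements. Then the final product of all part sizes is at most f(n,h)·(1 - 1/⌈n/h⌉ + 1/⌊t/(2k)⌋)^{(t - k⌈n/h⌉)/2}, where f(n,h) is the product of the part sizes of an equitable partition of n into h parts. -/

import Mathlib

/-- Product of the part sizes of an equitable partition of `n` into `h` parts:
`⌈n/h⌉ ^ (n % h) * ⌊n/h⌋ ^ (h - n % h)`. -/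
def fpart (n h : ℕ) : ℕ := ((n + h - 1) / h) ^ (n % h) * (n / h) ^ (h - n % h)

lemma fpart_closed (q r k : ℕ) (hk : 0 < k) (hr : r < k) :
    fpart (q * k + r) k = (q + 1) ^ r * q ^ (k - r) := by
  have hmod : (q * k + r) % k = r := by
    rw [Nat.add_comm, Nat.add_mul_mod_self_right, Nat.mod_eq_of_lt hr]
  have hdiv : (q * k + r) / k = q := by
    rw [Nat.add_comm, Nat.add_mul_div_right _ _ hk, Nat.div_eq_of_lt hr, Nat.zero_add]
  rcases Nat.eq_zero_or_pos r with hr0 | hr1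
  · subst hr0
    simp only [Nat.add_zero] at hmod hdiv ⊢
    simp [fpart, hmod, hdiv]
  · have hceil : (q * k + r + k - 1) / k = q + 1 := by
      have h1 : q * k + r + k - 1 = (r - 1) + (q + 1) * k := by
        have h2 : (q + 1) * k = q * k + k := by ring
        omega
      rw [h1, Nat.add_mul_div_right _ _ hk, Nat.div_eq_of_lt (by omega), Nat.zero_add]
    simp [fpart, hmod, hdiv, hceil]

lemma fpart_step (k u : ℕ) (hk : 0 < k) :
    fpart (u + 1) k * (u / k) = fpart u k * (u / k + 1) := by
  obtain ⟨q, r, hr, rfl⟩ : ∃ q r, r < k ∧ u = q * k + r :=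
    ⟨u / k, u % k, Nat.mod_lt _ hk, by rw [Nat.mul_comm]; exact (Nat.div_add_mod u k).symm⟩
  have hdiv : (q * k + r) / k = q := by
    rw [Nat.add_comm, Nat.add_mul_div_right _ _ hk, Nat.div_eq_of_lt hr, Nat.zero_add]
  rw [Nat.add_assoc]
  rcases lt_or_eq_of_le (Nat.succ_le_of_lt hr) with hr2 | hr2
  · rw [fpart_closed _ _ _ hk hr2, fpart_closed _ _ _ hk hr, hdiv]
    obtain ⟨e, he⟩ : ∃ e, k - r = e + 1 := ⟨k - r - 1, by omega⟩
    have h3 : k - (r + 1) = e := by omega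
    rw [h3, he, pow_succ, pow_succ]
    ring
  · have hre : q * k + (r + 1) = (q + 1) * k + 0 := by
      have e : (q + 1) * k = q * k + k := by ring
      omega
    rw [hre, fpart_closed (q + 1) 0 k hk hk, fpart_closed q r k hk hr, hdiv]
    rw [show k - 0 = r + 1 from by omega, show k - r = 1 from by omega]
    ring

lemma fpart_self (g : ℕ) (hg : 0 < g) : fpart g g = 1 := by
  simp [fpart, Nat.mod_self, Nat.div_self hg]

lemma fpart_lt (x g : ℕ) (hg : 0 < g) (hx : x < g) : fpart x g = 0 := by
  rw [fpart, Nat.mod_eq_of_lt hx, Nat.div_eq_of_lt hx,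
    zero_pow (by omega : g - x ≠ 0), mul_zero]

lemma fpart_base (n h k : ℕ) (hnh : h ≤ n) (hk : 0 < k) (hkh : k < h) :
    fpart (k * (n / h) + min (n % h) k) k *
      fpart (n - (k * (n / h) + min (n % h) k)) (h - k) = fpart n h := by
  have h0 : 0 < h := by omega
  set d := n / h with hddef
  set ρ := n % h with hρdef
  set g := h - k with hgdef
  have hg0 : 0 < g := by omega
  have hρh : ρ < h := by rw [hρdef]; exact Nat.mod_lt _ h0
  have hn : n = d * h + ρ := by
    rw [hddef, hρdef, Nat.mul_comm]; exact (Nat.div_add_mod n h).symm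
  have hgk : h = k + g := by omega
  have hdh : d * h = k * d + d * g := by rw [hgk]; ring
  have hrn : fpart n h = (d + 1) ^ ρ * d ^ (h - ρ) := by
    rw [hn]
    exact fpart_closed d ρ h h0 hρh
  rcases lt_or_ge ρ k with hc | hc
  · have hmin : min ρ k = ρ := min_eq_left (le_of_lt hc)
    have hs1 : k * d + min ρ k = d * k + ρ := by rw [hmin]; ring_nf
    rw [hs1]
    have hdk : d * k = k * d := Nat.mul_comm d k
    have hsub : n - (d * k + ρ) = d * g + 0 := by omega
    rw [hsub, fpart_closed d ρ k hk hc, fpart_closed d 0 g hg0 hg0, hrn]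
    rw [pow_zero, one_mul, Nat.sub_zero, mul_assoc, ← pow_add,
      show k - ρ + g = h - ρ from by omega]
  · have hmin : min ρ k = k := min_eq_right hc
    have hs1 : k * d + min ρ k = (d + 1) * k + 0 := by rw [hmin]; ring_nf
    rw [hs1]
    have hdk : (d + 1) * k + 0 = k * d + k := by ring
    have hρkg : ρ - k < g := by omega
    have hsub : n - ((d + 1) * k + 0) = d * g + (ρ - k) := by omega
    rw [hsub, fpart_closed (d + 1) 0 k hk hk, fpart_closed d (ρ - k) g hg0 hρkg, hrn]
    rw [pow_zero, one_mul, Nat.sub_zero]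
    rw [show (d + 1) ^ k * ((d + 1) ^ (ρ - k) * d ^ (g - (ρ - k))) =
      (d + 1) ^ (k + (ρ - k)) * d ^ (g - (ρ - k)) from by rw [pow_add]; ring]
    rw [show k + (ρ - k) = ρ from by omega, show g - (ρ - k) = h - ρ from by omega]

set_option maxHeartbeats 1000000 in
theorem stmt13 (n h k t : ℕ) (hnh : h ≤ n) (hk : 0 < k) (hkh : k < h)
    (ht : k * ((n + h - 1) / h) ≤ t) (htn : t ≤ n) :
    ((fpart t k * fpart (n - t) (h - k) : ℕ) : ℝ) ≤
      (fpart n h : ℝ) *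
        (1 - 1 / (((n + h - 1) / h : ℕ) : ℝ) + 1 / ((t / (2 * k) : ℕ) : ℝ)) ^
          ((t - k * ((n + h - 1) / h)) / 2) := by
  have h0 : 0 < h := by omega
  set g := h - k with hgdef
  have hg0 : 0 < g := by omega
  set d := n / h with hddef
  set ρ := n % h with hρdef
  set cc := (n + h - 1) / h with hccdef
  set q := t / (2 * k) with hqdef
  set m := (t - k * cc) / 2 with hmdef
  have hρh : ρ < h := by rw [hρdef]; exact Nat.mod_lt _ h0
  have hn : n = d * h + ρ := by
    rw [hddef, hρdef, Nat.mul_comm]; exact (Nat.div_add_mod n h).symm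
  have hd1 : 1 ≤ d := by rw [hddef]; exact (Nat.one_le_div_iff h0).mpr hnh
  have hgk : h = k + g := by omega
  have hdh : d * h = k * d + d * g := by rw [hgk]; ring
  -- cc facts
  have hcc0 : ρ = 0 → cc = d := by
    intro hρ0
    have e1 : n + h - 1 = (h - 1) + d * h := by omega
    rw [hccdef, e1, Nat.add_mul_div_right _ _ h0, Nat.div_eq_of_lt (by omega)]
    omega
  have hcc1 : ρ ≠ 0 → cc = d + 1 := by
    intro hρ0
    have e2 : (d + 1) * h = d * h + h := by ring
    have e1 : n + h - 1 = (ρ - 1) + (d + 1) * h := by omega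
    rw [hccdef, e1, Nat.add_mul_div_right _ _ h0, Nat.div_eq_of_lt (by omega)]
    omega
  have hccd : d ≤ cc ∧ cc ≤ d + 1 := by
    rcases Nat.eq_zero_or_pos ρ with h'|h'
    · rw [hcc0 h']; omega
    · rw [hcc1 (by omega)]; omega
  have hccpos : 1 ≤ cc := by omega
  have hnch : n ≤ cc * h := by
    rcases Nat.eq_zero_or_pos ρ with h'|h'
    · rw [hcc0 h']; have e2 : cc * h = h * cc := Nat.mul_comm _ _; omega
    · rw [hcc1 (by omega)]
      have e2 : (d + 1) * h = d * h + h := by ring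
      omega
  -- designated initial total
  obtain ⟨s0, hs0⟩ : ∃ x, x = k * d + min ρ k := ⟨_, rfl⟩
  have hs0cc : s0 ≤ k * cc := by
    rcases Nat.eq_zero_or_pos ρ with h'|h'
    · rw [hcc0 h']; omega
    · rw [hcc1 (by omega)]
      have e2 : k * (d + 1) = k * d + k := by ring
      omega
  have hkd1 : 1 ≤ k * d := Nat.mul_pos hk hd1
  have hkds0 : k * d ≤ s0 := by rw [hs0]; exact Nat.le_add_right _ _
  have hs0min : s0 ≤ k * d + k := by rw [hs0]; omega
  have hs01 : 1 ≤ s0 := by omega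
  have hs0t : s0 ≤ t := le_trans hs0cc ht
  have hbase : fpart s0 k * fpart (n - s0) g = fpart n h := by
    rw [hs0, hgdef, hddef, hρdef]
    exact fpart_base n h k hnh hk hkh
  by_cases hq0 : q = 0
  · -- degenerate case : t < 2k, so cc = 1, n = h
    have h2k : t < 2 * k := by
      have := Nat.div_eq_zero_iff.mp (hqdef ▸ hq0)
      omega
    have hcceq : cc = 1 := by
      by_contra hcc2
      have h2cc : 2 ≤ cc := by omega
      have : k * 2 ≤ k * cc := Nat.mul_le_mul_left k h2cc
      omega
    have hne : n = h := by
      rw [hcceq, Nat.one_mul] at hnch; omega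
    have hr0 : (1 : ℝ) - 1 / ((cc : ℕ) : ℝ) + 1 / ((q : ℕ) : ℝ) = 0 := by
      rw [hcceq, hq0]; norm_num
    rw [hr0]
    have hfnh : fpart n h = 1 := by rw [hne]; exact fpart_self h h0
    have hkt : k ≤ t := by
      rw [hcceq, Nat.mul_one] at ht; exact ht
    rcases Nat.lt_or_ge t (k + 2) with hcase | hcase
    · have hm0 : m = 0 := by rw [hmdef, hcceq, Nat.mul_one]; omega
      rw [hm0, pow_zero, hfnh, Nat.cast_one, one_mul]
      rcases Nat.lt_or_ge t (k + 1) with hcase2 | hcase2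
      · have htk : t = k := by omega
        rw [htk, show n - k = g from by rw [hgdef]; omega, fpart_self k hk, fpart_self g hg0]
        norm_num
      · have htk : t = k + 1 := by omega
        have hnt : n - t < g := by rw [hgdef]; omega
        rw [fpart_lt _ _ hg0 hnt, mul_zero, Nat.cast_zero]
        norm_num
    · have hm1 : m ≠ 0 := by rw [hmdef, hcceq, Nat.mul_one]; omega
      have hnt : n - t < g := by rw [hgdef]; omega
      rw [fpart_lt _ _ hg0 hnt, mul_zero, Nat.cast_zero, zero_pow hm1, mul_zero]
  · -- main case
    have hq1 : 1 ≤ q := Nat.one_le_iff_ne_zero.mpr hq0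
    set r : ℝ := 1 - 1 / ((cc : ℕ) : ℝ) + 1 / ((q : ℕ) : ℝ) with hrdef
    have hr0 : (0 : ℝ) ≤ r := by
      rw [hrdef]
      have h1 : (1 : ℝ) / ((cc : ℕ) : ℝ) ≤ 1 := by
        apply div_le_one_of_le₀
        · exact_mod_cast hccpos
        · positivity
      have h2 : (0 : ℝ) ≤ 1 / ((q : ℕ) : ℝ) := by positivity
      linarith
    have h2m : m * 2 ≤ t - k * cc := by rw [hmdef]; exact Nat.div_mul_le_self _ 2
    have hq2k : q * (2 * k) ≤ t := by rw [hqdef]; exact Nat.div_mul_le_self _ _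
    have hqk2 : 2 * (q * k) ≤ t := by
      have : q * (2 * k) = 2 * (q * k) := by ring
      omega
    have key : ∀ j, j ≤ t - s0 →
        ((fpart t k * fpart (n - t) g : ℕ) : ℝ) ≤
          ((fpart (t - j) k * fpart (n - (t - j)) g : ℕ) : ℝ) * r ^ (min j m) := by
      intro j
      induction j with
      | zero => intro _; simp
      | succ j ih =>
        intro hj1
        have hIH := ih (by omega)
        have hjt : j + 1 < t := by omega
        have hsub1 : t - (j + 1) = t - j - 1 := by omega
        have hsub2 : n - (t - (j + 1)) = n - (t - j) + 1 := by omega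
        rw [hsub2, hsub1]
        have hslb : s0 + 1 ≤ t - j := by omega
        have hsn : t - j ≤ n := by omega
        have hs1 : 1 ≤ t - j := by omega
        -- nat step identities
        obtain ⟨b, hb⟩ : ∃ x, x = (t - j - 1) / k := ⟨_, rfl⟩
        obtain ⟨B, hB⟩ : ∃ x, x = (n - (t - j)) / g := ⟨_, rfl⟩
        have id1 : fpart (t - j) k * b = fpart (t - j - 1) k * (b + 1) := by
          have := fpart_step k (t - j - 1) hk
          rw [Nat.sub_add_cancel hs1] at this
          rw [hb]; exact this
        have id2 : fpart (n - (t - j) + 1) g * B = fpart (n - (t - j)) g * (B + 1) := by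
          rw [hB]; exact fpart_step g (n - (t - j)) hg0
        have comb : (fpart (t - j) k * fpart (n - (t - j)) g) * (b * (B + 1)) =
            (fpart (t - j - 1) k * fpart (n - (t - j) + 1) g) * ((b + 1) * B) := by
          calc (fpart (t - j) k * fpart (n - (t - j)) g) * (b * (B + 1))
              = (fpart (t - j) k * b) * (fpart (n - (t - j)) g * (B + 1)) := by ring
            _ = (fpart (t - j - 1) k * (b + 1)) * (fpart (n - (t - j) + 1) g * B) := by
                rw [id1, ← id2]
            _ = (fpart (t - j - 1) k * fpart (n - (t - j) + 1) g) * ((b + 1) * B) := by ring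
        -- bounds
        have hs0le : s0 ≤ t - j - 1 := by clear * - hslb; omega
        have hkd_le : k * d ≤ t - j - 1 := le_trans hkds0 hs0le
        have hd_b : d ≤ b := by
          rw [hb]
          exact (Nat.le_div_iff_mul_le hk).mpr (by rw [Nat.mul_comm]; exact hkd_le)
        have hb1 : 1 ≤ b := le_trans hd1 hd_b
        have hBb : B ≤ b := by
          rcases lt_or_ge ρ k with hc | hc
          · have hmin : min ρ k = ρ := min_eq_left (le_of_lt hc)
            have e1 : n = d * g + s0 := by
              rw [hs0, hmin, hn, hgk]; ring
            have h1 : n - (t - j) < d * g := by omega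
            have hBd : B < d := by
              rw [hB]
              exact (Nat.div_lt_iff_lt_mul hg0).mpr h1
            omega
          · have hmin : min ρ k = k := min_eq_right hc
            have e1 : n + k = d * g + ρ + s0 := by
              rw [hs0, hmin, hn, hgk]; ring
            have e2 : (d + 1) * g = d * g + g := by ring
            have h1 : n - (t - j) < (d + 1) * g := by omega
            have hBd : B < d + 1 := by
              rw [hB]
              exact (Nat.div_lt_iff_lt_mul hg0).mpr h1
            have hd1b : d + 1 ≤ b := by
              rw [hb]
              apply (Nat.le_div_iff_mul_le hk).mpr
              have e3 : (d + 1) * k = k * d + k := by ring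
              omega
            omega
        rcases lt_or_ge j m with hjm | hjm
        · -- factor ≤ r
          have hmin1 : min (j + 1) m = j + 1 := by omega
          have hminj : min j m = j := by omega
          rw [hmin1]
          rw [hminj] at hIH
          -- extra bounds
          have hqb : q ≤ b := by
            rw [hb]
            apply (Nat.le_div_iff_mul_le hk).mpr
            omega
          have hskcc : k * cc + 1 ≤ t - j := by omega
          have hccg : cc * h = k * cc + cc * g := by rw [hgk]; ring
          have hBcc : B + 1 ≤ cc := by
            have h1 : n - (t - j) < cc * g := by omega
            have : B < cc := by
              rw [hB]
              exact (Nat.div_lt_iff_lt_mul hg0).mpr h1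
            omega
          -- real step
          have hstep : ((fpart (t - j) k * fpart (n - (t - j)) g : ℕ) : ℝ) ≤
              ((fpart (t - j - 1) k * fpart (n - (t - j) + 1) g : ℕ) : ℝ) * r := by
            have hpos : (0 : ℝ) < (b : ℝ) * ((B : ℝ) + 1) := by
              have : (1 : ℝ) ≤ (b : ℝ) := by exact_mod_cast hb1
              positivity
            rw [← mul_le_mul_iff_left₀ hpos]
            have combR : ((fpart (t - j) k * fpart (n - (t - j)) g : ℕ) : ℝ) *
                ((b : ℝ) * ((B : ℝ) + 1)) =
                ((fpart (t - j - 1) k * fpart (n - (t - j) + 1) g : ℕ) : ℝ) *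
                (((b : ℝ) + 1) * (B : ℝ)) := by
              exact_mod_cast congrArg (Nat.cast : ℕ → ℝ) comb
            rw [combR]
            have hY : (0 : ℝ) ≤ ((fpart (t - j - 1) k * fpart (n - (t - j) + 1) g : ℕ) : ℝ) :=
              Nat.cast_nonneg _
            have core : ((b : ℝ) + 1) * (B : ℝ) ≤ r * ((b : ℝ) * ((B : ℝ) + 1)) := by
              have hccR : (1 : ℝ) ≤ ((cc : ℕ) : ℝ) := by exact_mod_cast hccpos
              have hqR : (1 : ℝ) ≤ ((q : ℕ) : ℝ) := by exact_mod_cast hq1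
              have hBcR : (B : ℝ) + 1 ≤ ((cc : ℕ) : ℝ) := by exact_mod_cast hBcc
              have hqbR : ((q : ℕ) : ℝ) ≤ (b : ℝ) := by exact_mod_cast hqb
              have hB0 : (0 : ℝ) ≤ (B : ℝ) := Nat.cast_nonneg _
              have hrform : r = (((cc : ℕ) : ℝ) * ((q : ℕ) : ℝ) - ((q : ℕ) : ℝ) +
                  ((cc : ℕ) : ℝ)) / (((cc : ℕ) : ℝ) * ((q : ℕ) : ℝ)) := by
                rw [hrdef]
                field_simp
              rw [hrform, div_mul_eq_mul_div, le_div_iff₀ (by nlinarith)]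
              nlinarith [mul_le_mul_of_nonneg_right hBcR
                  (by positivity : (0:ℝ) ≤ (b : ℝ) * ((q : ℕ) : ℝ)),
                mul_le_mul_of_nonneg_left hqbR
                  (by positivity : (0:ℝ) ≤ ((B : ℝ) + 1) * ((cc : ℕ) : ℝ)),
                mul_pos (lt_of_lt_of_le zero_lt_one hccR) (lt_of_lt_of_le zero_lt_one hqR)]
            calc ((fpart (t - j - 1) k * fpart (n - (t - j) + 1) g : ℕ) : ℝ) *
                (((b : ℝ) + 1) * (B : ℝ))
                ≤ ((fpart (t - j - 1) k * fpart (n - (t - j) + 1) g : ℕ) : ℝ) *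
                  (r * ((b : ℝ) * ((B : ℝ) + 1))) := mul_le_mul_of_nonneg_left core hY
              _ = ((fpart (t - j - 1) k * fpart (n - (t - j) + 1) g : ℕ) : ℝ) * r *
                  ((b : ℝ) * ((B : ℝ) + 1)) := by ring
          calc ((fpart t k * fpart (n - t) g : ℕ) : ℝ)
              ≤ ((fpart (t - j) k * fpart (n - (t - j)) g : ℕ) : ℝ) * r ^ j := hIH
            _ ≤ (((fpart (t - j - 1) k * fpart (n - (t - j) + 1) g : ℕ) : ℝ) * r) * r ^ j :=
                mul_le_mul_of_nonneg_right hstep (pow_nonneg hr0 j)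
            _ = ((fpart (t - j - 1) k * fpart (n - (t - j) + 1) g : ℕ) : ℝ) * r ^ (j + 1) := by
                rw [pow_succ]; ring
        · -- factor ≤ 1
          have hmin1 : min (j + 1) m = m := by omega
          have hminj : min j m = m := by omega
          rw [hmin1]
          rw [hminj] at hIH
          have hfac : (b + 1) * B ≤ b * (B + 1) := by
            have e1 : (b + 1) * B = b * B + B := by ring
            have e2 : b * (B + 1) = b * B + b := by ring
            omega
          have hXY : fpart (t - j) k * fpart (n - (t - j)) g ≤
              fpart (t - j - 1) k * fpart (n - (t - j) + 1) g := by
            have hpos : 0 < b * (B + 1) := by positivity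
            apply Nat.le_of_mul_le_mul_right _ hpos
            calc (fpart (t - j) k * fpart (n - (t - j)) g) * (b * (B + 1))
                = (fpart (t - j - 1) k * fpart (n - (t - j) + 1) g) * ((b + 1) * B) := comb
              _ ≤ (fpart (t - j - 1) k * fpart (n - (t - j) + 1) g) * (b * (B + 1)) :=
                  Nat.mul_le_mul_left _ hfac
          calc ((fpart t k * fpart (n - t) g : ℕ) : ℝ)
              ≤ ((fpart (t - j) k * fpart (n - (t - j)) g : ℕ) : ℝ) * r ^ m := hIH
            _ ≤ ((fpart (t - j - 1) k * fpart (n - (t - j) + 1) g : ℕ) : ℝ) * r ^ m :=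
                mul_le_mul_of_nonneg_right (by exact_mod_cast hXY) (pow_nonneg hr0 m)
    have hm_le : m ≤ t - s0 := by omega
    have hfin := key (t - s0) le_rfl
    rw [show t - (t - s0) = s0 from by omega, min_eq_right hm_le] at hfin
    calc ((fpart t k * fpart (n - t) g : ℕ) : ℝ)
        ≤ ((fpart s0 k * fpart (n - s0) g : ℕ) : ℝ) * r ^ m := hfin
      _ = (fpart n h : ℝ) * r ^ m := by rw [hbase]
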